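/- arXiv:math/0211075 — 3 statements merged into one kernel-verified Lean document; each statement's English description precedes it below -/
import Mathlib

section
/- For every integer n ≥ 1 and real t > 0, the rational function R_n(t) = (n!/(t(t+1)⋯(t+n)))² has partial fraction decomposition R_n(t) = Σ_{k=0}^n [ C(n,k)²/(t+k)² + 2·C(n,k)²·(H_k − H_{n−k})/(t+k) ], where H_j is the j-th harmonic number (H_0 = 0). -/
open Finset

noncomputable def Hs (j : ℕ) : ℝ := ∑ i ∈ range j, (1:ℝ)/(i+1)

theorem frac_expand (n : ℕ) : ∀ t : ℝ, 0 < t →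
    (n.factorial : ℝ) / ∏ i ∈ range (n + 1), (t + i) =
      ∑ k ∈ range (n + 1), (-1 : ℝ) ^ k * (n.choose k : ℝ) / (t + k) := by
  induction n with
  | zero => intro t ht; simp
  | succ n ih =>
    intro t ht
    have h1 : ∀ j : ℕ, (0:ℝ) < t + j := fun j => by positivity
    have hne : ∀ j : ℕ, (t + (j:ℝ)) ≠ 0 := fun j => (h1 j).ne'
    have hA : (∏ i ∈ range (n + 1), (t + (i:ℝ))) ≠ 0 :=
      Finset.prod_ne_zero_iff.2 fun i _ => hne i
    have key : (↑(n+1).factorial : ℝ) / ∏ i ∈ range (n + 2), (t + i)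
        = (n.factorial : ℝ) / ∏ i ∈ range (n + 1), (t + i)
          - (n.factorial : ℝ) / ∏ i ∈ range (n + 1), ((t+1) + i) := by
      have hB0 : ∏ i ∈ range (n + 1), ((t+1) + (i:ℝ)) = ∏ i ∈ range (n+1), (t + ((i+1:ℕ):ℝ)) := by
        apply Finset.prod_congr rfl; intro i _; push_cast; ring
      have hsplit1 : ∏ i ∈ range (n + 2), (t + (i:ℝ))
          = (∏ i ∈ range (n + 1), (t + (i:ℝ))) * (t + ((n+1:ℕ):ℝ)) :=
        Finset.prod_range_succ _ _
      have hsplit2 : ∏ i ∈ range (n + 2), (t + (i:ℝ))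
          = (∏ i ∈ range (n + 1), (t + ((i+1:ℕ):ℝ))) * t := by
        rw [Finset.prod_range_succ' (fun i => (t + (i:ℝ))) (n+1)]
        norm_num
      have hB : (∏ i ∈ range (n + 1), (t + ((i+1:ℕ):ℝ))) ≠ 0 :=
        Finset.prod_ne_zero_iff.2 fun i _ => hne (i+1)
      rw [hB0, hsplit1]
      set A := ∏ i ∈ range (n + 1), (t + (i:ℝ)) with hAdef
      set B := ∏ i ∈ range (n + 1), (t + ((i+1:ℕ):ℝ)) with hBdef
      have hAB : A * (t + ((n+1:ℕ):ℝ)) = B * t := by rw [← hsplit1, hsplit2]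
      rw [Nat.factorial_succ]
      have hnt : t + ((n+1:ℕ):ℝ) ≠ 0 := hne (n+1)
      field_simp
      push_cast at hAB ⊢
      linear_combination (n.factorial:ℝ) * hAB
    rw [key, ih t ht, ih (t+1) (by linarith)]
    have hshift : (∑ k ∈ range (n + 1), (-1 : ℝ) ^ k * (n.choose k : ℝ) / ((t+1) + k))
        = ∑ k ∈ range (n + 1), (-1 : ℝ) ^ k * (n.choose k : ℝ) / (t + ((k+1:ℕ):ℝ)) := by
      apply Finset.sum_congr rfl; intro k _; push_cast; ring_nf
    rw [hshift]
    rw [Finset.sum_range_succ' (fun k => (-1 : ℝ) ^ k * ((n+1).choose k : ℝ) / (t + (k:ℝ))) (n+1)]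
    have hG : ∑ k ∈ range (n+1), (-1 : ℝ) ^ (k+1) * ((n+1).choose (k+1) : ℝ) / (t + ((k+1:ℕ):ℝ))
        = ∑ k ∈ range (n+1), (-((-1 : ℝ) ^ k * (n.choose k : ℝ) / (t + ((k+1:ℕ):ℝ)))
            + (-1 : ℝ) ^ (k+1) * (n.choose (k+1) : ℝ) / (t + ((k+1:ℕ):ℝ))) := by
      apply Finset.sum_congr rfl; intro k _
      rw [Nat.choose_succ_succ]
      push_cast; ring
    rw [hG, Finset.sum_add_distrib, Finset.sum_neg_distrib]
    have htail : ∑ k ∈ range (n+1), (-1 : ℝ) ^ (k+1) * (n.choose (k+1) : ℝ) / (t + ((k+1:ℕ):ℝ))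
          + (-1 : ℝ) ^ 0 * ((n+1).choose 0 : ℝ) / (t + ((0:ℕ):ℝ))
        = ∑ k ∈ range (n+1), (-1 : ℝ) ^ k * (n.choose k : ℝ) / (t + (k:ℝ)) := by
      have h0 : ((-1 : ℝ) ^ 0 * ((n+1).choose 0 : ℝ) / (t + ((0:ℕ):ℝ)))
          = (-1 : ℝ) ^ 0 * (n.choose 0 : ℝ) / (t + ((0:ℕ):ℝ)) := by norm_num
      rw [h0, ← Finset.sum_range_succ' (fun k => (-1 : ℝ) ^ k * (n.choose k : ℝ) / (t + (k:ℝ))) (n+1)]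
      rw [Finset.sum_range_succ (fun k => (-1 : ℝ) ^ k * (n.choose k : ℝ) / (t + (k:ℝ))) (n+1)]
      simp
    rw [add_assoc, htail]
    ring

theorem alt_harmonic (n : ℕ) :
    ∑ m ∈ range n, (-1 : ℝ) ^ m * (n.choose (m+1) : ℝ) / (m+1)
      = ∑ i ∈ range n, (1:ℝ) / (i+1) := by
  induction n with
  | zero => simp
  | succ n ih =>
    have hsplit : ∑ m ∈ range (n+1), (-1 : ℝ) ^ m * ((n+1).choose (m+1) : ℝ) / (m+1)
        = ∑ m ∈ range (n+1), ((-1 : ℝ) ^ m * (n.choose (m+1) : ℝ) / (m+1)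
            + (-1 : ℝ) ^ m * (n.choose m : ℝ) / (m+1)) := by
      apply Finset.sum_congr rfl; intro m _
      rw [Nat.choose_succ_succ]
      push_cast; ring
    rw [hsplit, Finset.sum_add_distrib]
    have h1 : ∑ m ∈ range (n+1), (-1 : ℝ) ^ m * (n.choose (m+1) : ℝ) / (m+1)
        = ∑ i ∈ range n, (1:ℝ) / (i+1) := by
      rw [Finset.sum_range_succ]
      simp [ih]
    have h2 : ∑ m ∈ range (n+1), (-1 : ℝ) ^ m * (n.choose m : ℝ) / (m+1)
        = 1 / ((n:ℝ)+1) := by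
      have hc : ∀ m : ℕ, (n.choose m : ℝ) / ((m:ℝ)+1) = ((n+1).choose (m+1) : ℝ) / ((n:ℝ)+1) := by
        intro m
        have := Nat.add_one_mul_choose_eq n m
        have h' : ((n+1) * n.choose m : ℝ) = (((n+1).choose (m+1) * (m+1) : ℕ) : ℝ) := by
          exact_mod_cast congrArg (Nat.cast : ℕ → ℝ) this
        push_cast at h'
        have hm : ((m:ℝ)+1) ≠ 0 := by positivity
        have hn : ((n:ℝ)+1) ≠ 0 := by positivity
        field_simp
        linarith [h']
      have : ∑ m ∈ range (n+1), (-1 : ℝ) ^ m * (n.choose m : ℝ) / (m+1)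
          = (∑ m ∈ range (n+1), (-1 : ℝ) ^ m * ((n+1).choose (m+1) : ℝ)) / ((n:ℝ)+1) := by
        rw [Finset.sum_div]
        apply Finset.sum_congr rfl; intro m _
        rw [mul_div_assoc, hc m, mul_div_assoc]
      rw [this]
      congr 1
      -- Σ_{m<n+1} (-1)^m C(n+1,m+1) = 1
      have halt := Int.alternating_sum_range_choose (n := n+1)
      rw [if_neg (Nat.succ_ne_zero n)] at halt
      have halt' : (∑ i ∈ range (n+2), (-1 : ℝ) ^ i * ((n+1).choose i : ℝ)) = 0 := by
        exact_mod_cast congrArg (Int.cast : ℤ → ℝ) halt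
      rw [Finset.sum_range_succ' (fun i => (-1 : ℝ) ^ i * ((n+1).choose i : ℝ)) (n+1)] at halt'
      simp only [pow_zero, one_mul, Nat.choose_zero_right, Nat.cast_one] at halt'
      have : ∑ m ∈ range (n+1), (-1 : ℝ) ^ m * ((n+1).choose (m+1) : ℝ)
          = - ∑ i ∈ range (n+1), (-1 : ℝ) ^ (i+1) * ((n+1).choose (i+1) : ℝ) := by
        rw [← Finset.sum_neg_distrib]
        apply Finset.sum_congr rfl; intro m _; ring
      rw [this]
      linarith [halt']
    rw [h1, h2, Finset.sum_range_succ]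

theorem alt_harmonic' (n : ℕ) :
    ∑ m ∈ range n, (-1 : ℝ) ^ m * (n.choose (m+1) : ℝ) / (m+1) = Hs n := alt_harmonic n

theorem star (n : ℕ) : ∀ k ≤ n,
    ∑ m ∈ range k, (-1:ℝ)^m * (n.choose (k-1-m) : ℝ)/(m+1)
      = (n.choose k : ℝ) * (Hs n - Hs (n-k)) := by
  induction n with
  | zero => intro k hk; interval_cases k <;> simp
  | succ n ih =>
    intro k hk
    match k with
    | 0 => simp
    | (j+1) =>
      by_cases hj : j + 1 ≤ n
      · -- main case
        have hjn : j ≤ n := le_trans (Nat.le_succ j) hj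
        have hIH1 := ih (j+1) hj
        have hIH2 := ih j hjn
        have hstep : ∑ m ∈ range (j+1), (-1:ℝ)^m * ((n+1).choose (j+1-1-m) : ℝ)/(m+1)
            = ∑ m ∈ range j, (-1:ℝ)^m * (n.choose (j-m) : ℝ)/(m+1)
              + ∑ m ∈ range j, (-1:ℝ)^m * (n.choose (j-1-m) : ℝ)/(m+1)
              + (-1:ℝ)^j / (j+1) := by
          rw [Finset.sum_range_succ]
          have hlast : (-1:ℝ)^j * ((n+1).choose (j+1-1-j) : ℝ)/(j+1) = (-1:ℝ)^j/(j+1) := by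
            simp [Nat.sub_self]
          rw [hlast]
          congr 1
          rw [← Finset.sum_add_distrib]
          apply Finset.sum_congr rfl; intro m hm
          have hmj : m < j := Finset.mem_range.1 hm
          have h1 : j + 1 - 1 - m = (j - 1 - m) + 1 := by omega
          have h2 : (j - 1 - m) + 1 = j - m := by omega
          rw [h1, Nat.choose_succ_succ, Nat.succ_eq_add_one, h2]
          push_cast; ring
        have hsum1 : ∑ m ∈ range (j+1), (-1:ℝ)^m * (n.choose (j+1-1-m) : ℝ)/(m+1)
            = ∑ m ∈ range j, (-1:ℝ)^m * (n.choose (j-m) : ℝ)/(m+1) + (-1:ℝ)^j/(j+1) := by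
          rw [Finset.sum_range_succ]
          have e1 : ∀ m ∈ range j, (-1:ℝ)^m * (n.choose (j+1-1-m) : ℝ)/(m+1)
              = (-1:ℝ)^m * (n.choose (j-m) : ℝ)/(m+1) := by
            intro m hm
            have : j + 1 - 1 - m = j - m := by omega
            rw [this]
          rw [Finset.sum_congr rfl e1]
          simp [Nat.sub_self]
        rw [hstep, show
            (∑ m ∈ range j, (-1:ℝ)^m * (↑(n.choose (j - m)))/(↑m+1)
              + ∑ m ∈ range j, (-1:ℝ)^m * (↑(n.choose (j - 1 - m)))/(↑m+1) + (-1:ℝ)^j/(↑j+1))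
            = (∑ m ∈ range j, (-1:ℝ)^m * (↑(n.choose (j - m)))/(↑m+1) + (-1:ℝ)^j/(↑j+1))
              + ∑ m ∈ range j, (-1:ℝ)^m * (↑(n.choose (j - 1 - m)))/(↑m+1) from by ring,
          ← hsum1, hIH1, hIH2]
        have hH1 : Hs (n+1) = Hs n + 1/((n:ℝ)+1) := by
          unfold Hs; rw [Finset.sum_range_succ]
        have hH2 : Hs (n - j) = Hs (n - (j+1)) + 1/((n:ℝ)-(j:ℝ)) := by
          unfold Hs
          rw [show n - j = (n-(j+1))+1 from by omega, Finset.sum_range_succ]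
          congr 1
          rw [Nat.cast_sub hj]
          push_cast; ring_nf
        rw [show n + 1 - (j+1) = n - j from by omega, hH1, hH2]
        have hc1 : (((n+1).choose (j+1)) : ℝ) = (n.choose (j+1):ℝ) + (n.choose j:ℝ) := by
          rw [Nat.choose_succ_succ]; push_cast; ring
        have hkey : (((n+1).choose (j+1)) : ℝ) * ((j:ℝ)+1) = ((n:ℝ)+1) * (n.choose j : ℝ) := by
          have := Nat.add_one_mul_choose_eq n j
          have h' : ((n+1) * n.choose j : ℕ) = ((n+1).choose (j+1) * (j+1) : ℕ) := this
          exact_mod_cast (congrArg (Nat.cast (R := ℝ)) h').symm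
        have hnj0 : (0:ℝ) < (n:ℝ) - (j:ℝ) := by
          have : (j:ℝ) + 1 ≤ (n:ℝ) := by exact_mod_cast hj
          linarith
        have hnj0' : (n:ℝ) - (j:ℝ) ≠ 0 := ne_of_gt hnj0
        have hn0 : ((n:ℝ)+1) ≠ 0 := by positivity
        rw [hc1] at hkey ⊢
        have hratio : ((n.choose (j+1):ℝ) + (n.choose j:ℝ)) * ((n:ℝ)-(j:ℝ))
            = ((n:ℝ)+1) * (n.choose (j+1):ℝ) := by linear_combination -hkey
        field_simp
        linear_combination -hratio
      · -- k = n+1 case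
        have hjn : n = j := by omega
        subst hjn
        have hsymm : ∀ m ∈ range (n+1), (-1:ℝ)^m * ((n+1).choose (n+1-1-m) : ℝ)/(m+1)
            = (-1:ℝ)^m * ((n+1).choose (m+1) : ℝ)/(m+1) := by
          intro m hm
          have hm' : m < n + 1 := Finset.mem_range.1 hm
          have h1 : n + 1 - 1 - m = (n+1) - (m+1) := by omega
          rw [h1, Nat.choose_symm (by omega : m + 1 ≤ n + 1)]
        rw [Finset.sum_congr rfl hsymm, alt_harmonic' (n+1)]
        simp [Hs, Nat.sub_self]

theorem lem4 (n k : ℕ) (hk : k ≤ n) :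
    ∑ j ∈ range (n+1), (if j = k then 0 else (-1:ℝ)^j * (n.choose j : ℝ)/((j:ℝ)-(k:ℝ)))
      = (-1:ℝ)^k * (n.choose k : ℝ) * (Hs k - Hs (n-k)) := by
  have hsplit : n + 1 = k + (n + 1 - k) := by omega
  rw [hsplit, Finset.sum_range_add]
  have h2 : n + 1 - k = (n - k) + 1 := by omega
  rw [h2, Finset.sum_range_succ'
    (fun j => (if k + j = k then 0 else (-1:ℝ)^(k+j) * (n.choose (k+j) : ℝ)/(((k+j:ℕ):ℝ)-(k:ℝ)))) (n-k)]
  have hzero : (if k + 0 = k then (0:ℝ) else (-1:ℝ)^(k+0) * (n.choose (k+0) : ℝ)/(((k+0:ℕ):ℝ)-(k:ℝ))) = 0 := by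
    simp
  rw [hzero, add_zero]
  -- first part
  have hfirst : ∑ j ∈ range k, (if j = k then 0 else (-1:ℝ)^j * (n.choose j : ℝ)/((j:ℝ)-(k:ℝ)))
      = (-1:ℝ)^k * ((n.choose k : ℝ) * (Hs n - Hs (n-k))) := by
    rw [← star n k hk, Finset.mul_sum]
    rw [← Finset.sum_range_reflect
      (fun j => (if j = k then 0 else (-1:ℝ)^j * (n.choose j : ℝ)/((j:ℝ)-(k:ℝ)))) k]
    apply Finset.sum_congr rfl
    intro m hm
    have hmk : m < k := Finset.mem_range.1 hm
    have hne : k - 1 - m ≠ k := by omega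
    rw [if_neg hne]
    have hcast : ((k - 1 - m : ℕ) : ℝ) = (k:ℝ) - 1 - (m:ℝ) := by
      have : (k:ℝ) - 1 - (m:ℝ) = ((k - 1 - m : ℕ) : ℝ) := by
        rw [Nat.cast_sub (by omega : m ≤ k - 1), Nat.cast_sub (by omega : 1 ≤ k)]
        push_cast; ring
      linarith [this]
    rw [hcast]
    have hsgn : (-1:ℝ)^(k-1-m) = (-1:ℝ)^k * (-1:ℝ)^(m+1) := by
      have : (-1:ℝ)^(k-1-m) * (-1:ℝ)^(m+1) = (-1:ℝ)^k := by
        rw [← pow_add]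
        congr 1; omega
      have h4 : ((-1:ℝ)^(m+1)) * ((-1:ℝ)^(m+1)) = 1 := by
        rw [← pow_add, ← two_mul, pow_mul]; norm_num
      calc (-1:ℝ)^(k-1-m) = (-1:ℝ)^(k-1-m) * ((-1:ℝ)^(m+1) * (-1:ℝ)^(m+1)) := by rw [h4]; ring
        _ = ((-1:ℝ)^(k-1-m) * (-1:ℝ)^(m+1)) * (-1:ℝ)^(m+1) := by ring
        _ = (-1:ℝ)^k * (-1:ℝ)^(m+1) := by rw [this]
    rw [hsgn]
    have hden : (k:ℝ) - 1 - (m:ℝ) - (k:ℝ) = -((m:ℝ)+1) := by ring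
    rw [hden, div_neg]
    ring
  -- second part
  have hsecond : ∑ m ∈ range (n-k),
        (if k + (m+1) = k then 0 else (-1:ℝ)^(k+(m+1)) * (n.choose (k+(m+1)) : ℝ)/(((k+(m+1):ℕ):ℝ)-(k:ℝ)))
      = -((-1:ℝ)^k * ((n.choose k : ℝ) * (Hs n - Hs k))) := by
    have hstar2 := star n (n-k) (by omega)
    have hnk : n - (n - k) = k := by omega
    rw [hnk] at hstar2
    rw [show -((-1:ℝ)^k * ((n.choose k : ℝ) * (Hs n - Hs k)))
        = (-1:ℝ)^k * (-1) * ((n.choose (n-k) : ℝ) * (Hs n - Hs k)) from by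
          rw [Nat.choose_symm hk]; ring]
    rw [← hstar2, Finset.mul_sum]
    apply Finset.sum_congr rfl
    intro m hm
    have hmk : m < n - k := Finset.mem_range.1 hm
    have hne : k + (m+1) ≠ k := by omega
    rw [if_neg hne]
    have hcast : ((k + (m+1) : ℕ) : ℝ) - (k:ℝ) = (m:ℝ) + 1 := by push_cast; ring
    rw [hcast]
    have hch : n.choose (k + (m+1)) = n.choose ((n-k) - 1 - m) := by
      rw [show (n-k) - 1 - m = n - (k + (m+1)) from by omega,
        Nat.choose_symm (by omega : k + (m+1) ≤ n)]
    rw [hch]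
    have hsgn : (-1:ℝ)^(k+(m+1)) = (-1:ℝ)^k * (-1) * (-1:ℝ)^m := by
      rw [pow_add, pow_add]; ring
    rw [hsgn]
    ring
  rw [hfirst, hsecond]
  ring

theorem partial_fraction_Rn (n : ℕ) (hn : 1 ≤ n) (t : ℝ) (ht : 0 < t) :
    ((n.factorial : ℝ) / ∏ i ∈ Finset.range (n + 1), (t + i)) ^ 2
      = ∑ k ∈ Finset.range (n + 1),
          ((n.choose k : ℝ) ^ 2 / (t + k) ^ 2
            + 2 * (n.choose k : ℝ) ^ 2
                * ((∑ i ∈ Finset.range k, (1 : ℝ) / (i + 1))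
                    - ∑ i ∈ Finset.range (n - k), (1 : ℝ) / (i + 1)) / (t + k)) := by
  have hd : ∀ j : ℕ, t + (j:ℝ) ≠ 0 := fun j => by positivity
  set a : ℕ → ℝ := fun j => (-1:ℝ)^j * (n.choose j : ℝ) with ha
  set g : ℕ → ℕ → ℝ := fun k j => if j = k then 0
      else (a k * a j / ((j:ℝ)-(k:ℝ))) * (1/(t+(k:ℝ))) with hg
  rw [frac_expand n t ht, sq, Finset.sum_mul_sum]
  have hpoint : ∀ k ∈ range (n+1), ∀ j ∈ range (n+1),
      (a k / (t + (k:ℝ))) * (a j / (t + (j:ℝ)))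
        = (if j = k then (a k)^2/(t+(k:ℝ))^2 else 0) + g k j + g j k := by
    intro k _ j _
    by_cases hjk : j = k
    · subst hjk
      simp only [hg, if_pos rfl, add_zero, if_true]
      rw [div_mul_div_comm, ← sq, ← sq]
    · have hjk' : ((j:ℝ) - (k:ℝ)) ≠ 0 := by
        have : (j:ℝ) ≠ (k:ℝ) := by exact_mod_cast hjk
        intro h; apply this; linarith
      have hkj' : ((k:ℝ) - (j:ℝ)) ≠ 0 := by intro h; apply hjk'; linarith
      simp only [hg, if_neg hjk, if_neg (Ne.symm hjk)]
      field_simp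
      ring
  rw [Finset.sum_congr rfl (fun k hk => Finset.sum_congr rfl (fun j hj => hpoint k hk j hj))]
  have hsplit : ∀ k ∈ range (n+1),
      ∑ j ∈ range (n+1), ((if j = k then (a k)^2/(t+(k:ℝ))^2 else 0) + g k j + g j k)
        = ∑ j ∈ range (n+1), (if j = k then (a k)^2/(t+(k:ℝ))^2 else 0)
          + ∑ j ∈ range (n+1), g k j + ∑ j ∈ range (n+1), g j k := by
    intro k _
    rw [Finset.sum_add_distrib, Finset.sum_add_distrib]
  rw [Finset.sum_congr rfl hsplit]
  rw [Finset.sum_add_distrib, Finset.sum_add_distrib]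
  have hswap : ∑ k ∈ range (n+1), ∑ j ∈ range (n+1), g j k
      = ∑ k ∈ range (n+1), ∑ j ∈ range (n+1), g k j := Finset.sum_comm
  rw [hswap, ← Finset.sum_add_distrib, ← Finset.sum_add_distrib]
  apply Finset.sum_congr rfl
  intro k hk
  have hkn : k ≤ n := by have := Finset.mem_range.1 hk; omega
  have hdiag : ∑ j ∈ range (n+1), (if j = k then (a k)^2/(t+(k:ℝ))^2 else 0)
      = (a k)^2/(t+(k:ℝ))^2 := by
    rw [Finset.sum_ite_eq' (range (n+1)) k (fun _ => (a k)^2/(t+(k:ℝ))^2), if_pos hk]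
  have hY : ∑ j ∈ range (n+1), g k j
      = ((-1:ℝ)^k * (n.choose k : ℝ) * (Hs k - Hs (n-k))) * (a k * (1/(t+(k:ℝ)))) := by
    rw [← lem4 n k hkn, Finset.sum_mul]
    apply Finset.sum_congr rfl
    intro j _
    by_cases hjk : j = k
    · simp only [hg, if_pos hjk, zero_mul]
    · simp only [hg, if_neg hjk]
      ring
  rw [hdiag, hY]
  have hsq : ((-1:ℝ)^k)^2 = 1 := by
    rw [← pow_mul, mul_comm, pow_mul]; norm_num
  have e1 : (a k)^2 = (n.choose k : ℝ)^2 := by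
    simp only [ha]; rw [mul_pow, hsq, one_mul]
  have e2 : (-1:ℝ)^k * (n.choose k : ℝ) * (Hs k - Hs (n-k)) * (a k * (1/(t+(k:ℝ))))
      = (n.choose k : ℝ)^2 * (Hs k - Hs (n-k)) * (1/(t+(k:ℝ))) := by
    simp only [ha]
    linear_combination ((n.choose k : ℝ)^2 * (Hs k - Hs (n-k)) * (1/(t+(k:ℝ)))) * hsq
  rw [e1, e2]
  simp only [Hs]
  ring
end

section
/- Fix n ≥ 1 and real numbers B_{k2}, B_{k1} (0 ≤ k ≤ n) with Σ_{k=0}^n B_{k1} = 0 and Σ_{k=0}^n (B_{k2} − k·B_{k1}) = 0. Let R(t) = Σ_{k=0}^n ( B_{k2}/(t+k)² + B_{k1}/(t+k) ). Then Σ_{ν=n+1}^∞ ∫_ν^∞ R(t) dt = B·γ + L − A, where B = Σ_{k=0}^n B_{k2}, L = Σ_{m=1}^n Σ_{k=m}^n B_{k1}·log(n+m), and A = Σ_{k=0}^n B_{k2}·H_{n+k}. -/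
open Finset MeasureTheory Filter Real Topology


lemma tele_sum : ∀ (k : ℕ) (g : ℕ → ℝ) (N : ℕ),
    ∑ ν ∈ Finset.range N, (g (ν + k) - g ν) = ∑ j ∈ Finset.range k, (g (N + j) - g j) := by
  intro k
  induction k with
  | zero => simp
  | succ k ih =>
    intro g N
    have key : ∑ ν ∈ Finset.range N, (g (ν + (k + 1)) - g ν)
        = ∑ ν ∈ Finset.range N, ((fun m => g (m + 1)) (ν + k) - (fun m => g (m + 1)) ν)
          + ∑ ν ∈ Finset.range N, (g (ν + 1) - g ν) := by
      rw [← Finset.sum_add_distrib]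
      refine Finset.sum_congr rfl fun ν _ => ?_
      simp only
      have h : ν + k + 1 = ν + (k + 1) := by omega
      rw [h]; ring
    rw [key, ih (fun m => g (m + 1)), Finset.sum_range_sub g,
      Finset.sum_range_succ' (fun j => g (N + j) - g j) k]
    refine congrArg₂ (· + ·) (Finset.sum_congr rfl fun j _ => rfl) (by norm_num)

lemma log_diff_tendsto (c : ℝ) (hc : 0 ≤ c) :
    Tendsto (fun t : ℝ => Real.log (t + c) - Real.log t) atTop (𝓝 0) := by
  have h1 : Tendsto (fun t : ℝ => 1 + c / t) atTop (𝓝 1) := by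
    have := (tendsto_const_nhds (x := (1:ℝ)) (f := atTop)).add
      ((tendsto_const_nhds (x := c)).div_atTop (tendsto_id))
    simpa using this
  have h2 := (Real.continuousAt_log (by norm_num : (1:ℝ) ≠ 0)).tendsto.comp h1
  rw [Real.log_one] at h2
  apply h2.congr'
  filter_upwards [eventually_gt_atTop (0:ℝ)] with t ht
  simp only [Function.comp_apply]
  rw [show 1 + c / t = (t + c) / t by field_simp, Real.log_div (by positivity) (ne_of_gt ht)]



lemma int_sq (a c : ℝ) (hc : 0 ≤ c) (ha : 0 < a) :
    IntegrableOn (fun t : ℝ => ((t + c) ^ 2)⁻¹) (Set.Ioi a) ∧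
      ∫ t in Set.Ioi a, ((t + c) ^ 2)⁻¹ = (a + c)⁻¹ := by
  have hderiv : ∀ t ∈ Set.Ici a, HasDerivAt (fun t : ℝ => -(t + c)⁻¹) (((t + c) ^ 2)⁻¹) t := by
    intro t ht
    have h0 : (0:ℝ) < t + c := by have := ht.out; linarith
    have := (((hasDerivAt_id t).add_const c).inv h0.ne').neg
    exact this.congr_deriv (by simp [neg_div])
  have hpos : ∀ t ∈ Set.Ioi a, (0:ℝ) ≤ ((t + c) ^ 2)⁻¹ := fun t ht => by positivity
  have htend : Tendsto (fun t : ℝ => -(t + c)⁻¹) atTop (𝓝 0) := by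
    have := (tendsto_inv_atTop_zero.comp (tendsto_atTop_add_const_right atTop c tendsto_id)).neg
    simpa using this
  refine ⟨integrableOn_Ioi_deriv_of_nonneg' hderiv hpos htend, ?_⟩
  rw [integral_Ioi_of_hasDerivAt_of_nonneg' hderiv hpos htend]
  simp

lemma int_inv_sub (a c : ℝ) (hc : 0 ≤ c) (ha : 0 < a) :
    IntegrableOn (fun t : ℝ => t⁻¹ - (t + c)⁻¹) (Set.Ioi a) ∧
      ∫ t in Set.Ioi a, (t⁻¹ - (t + c)⁻¹) = Real.log (a + c) - Real.log a := by
  have hderiv : ∀ t ∈ Set.Ici a,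
      HasDerivAt (fun t : ℝ => Real.log t - Real.log (t + c)) (t⁻¹ - (t + c)⁻¹) t := by
    intro t ht
    have h0 : (0:ℝ) < t := lt_of_lt_of_le ha ht.out
    have h1 : (0:ℝ) < t + c := by linarith
    have := (Real.hasDerivAt_log h0.ne').sub
      (((hasDerivAt_id t).add_const c).log h1.ne')
    exact this.congr_deriv (by simp)
  have hpos : ∀ t ∈ Set.Ioi a, (0:ℝ) ≤ t⁻¹ - (t + c)⁻¹ := by
    intro t ht
    have h0 : (0:ℝ) < t := lt_trans ha ht.out
    have h1 : (0:ℝ) < t + c := by linarith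
    have : (t + c)⁻¹ ≤ t⁻¹ := by
      apply inv_anti₀ h0; linarith
    linarith
  have htend : Tendsto (fun t : ℝ => Real.log t - Real.log (t + c)) atTop (𝓝 0) := by
    have := (log_diff_tendsto c hc).neg
    simp only [neg_sub, neg_zero] at this
    exact this
  refine ⟨integrableOn_Ioi_deriv_of_nonneg' hderiv hpos htend, ?_⟩
  rw [integral_Ioi_of_hasDerivAt_of_nonneg' hderiv hpos htend]
  ring

lemma integral_R (n : ℕ) (B2 B1 : ℕ → ℝ)
    (h1 : ∑ k ∈ Finset.range (n + 1), B1 k = 0)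
    (R : ℝ → ℝ)
    (hR : ∀ t : ℝ, R t = ∑ k ∈ Finset.range (n + 1),
        (B2 k / (t + k) ^ 2 + B1 k / (t + k)))
    (a : ℝ) (ha : 0 < a) :
    ∫ t in Set.Ici a, R t = ∑ k ∈ Finset.range (n + 1),
      (B2 k * (a + k)⁻¹ - B1 k * (Real.log (a + k) - Real.log a)) := by
  rw [MeasureTheory.integral_Ici_eq_integral_Ioi]
  have hrw : ∀ t ∈ Set.Ioi a, R t = ∑ k ∈ Finset.range (n + 1),
      (B2 k * ((t + k) ^ 2)⁻¹ + (-B1 k) * (t⁻¹ - (t + k)⁻¹)) := by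
    intro t ht
    have ht0 : (0:ℝ) < t := lt_trans ha ht
    rw [hR]
    have hz : ∑ k ∈ Finset.range (n + 1), B1 k * t⁻¹ = 0 := by
      rw [← Finset.sum_mul, h1, zero_mul]
    have : ∑ k ∈ Finset.range (n + 1), (B2 k / (t + k) ^ 2 + B1 k / (t + k))
        = ∑ k ∈ Finset.range (n + 1),
          (B2 k * ((t + k) ^ 2)⁻¹ + (-B1 k) * (t⁻¹ - (t + k)⁻¹))
          + ∑ k ∈ Finset.range (n + 1), B1 k * t⁻¹ := by
      rw [← Finset.sum_add_distrib]
      exact Finset.sum_congr rfl fun k _ => by ring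
    rw [this, hz, add_zero]
  rw [setIntegral_congr_fun measurableSet_Ioi hrw,
    MeasureTheory.integral_finset_sum]
  · refine Finset.sum_congr rfl fun k hk => ?_
    have hck : (0:ℝ) ≤ (k : ℝ) := Nat.cast_nonneg k
    have i1 := int_sq a k hck ha
    have i2 := int_inv_sub a k hck ha
    rw [MeasureTheory.integral_add (i1.1.const_mul _) (i2.1.const_mul _),
      integral_const_mul, integral_const_mul, i1.2, i2.2]
    ring
  · intro k hk
    have hck : (0:ℝ) ≤ (k : ℝ) := Nat.cast_nonneg k
    exact ((int_sq a k hck ha).1.const_mul _).add ((int_inv_sub a k hck ha).1.const_mul _)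

lemma log_approx (x : ℝ) (hx : 0 ≤ x) : |Real.log (1 + x) - x| ≤ x ^ 2 := by
  have h1 : (0:ℝ) < 1 + x := by linarith
  have hub : Real.log (1 + x) ≤ x := by
    have := Real.log_le_sub_one_of_pos h1
    linarith
  have hlb : 1 - (1 + x)⁻¹ ≤ Real.log (1 + x) := by
    have := Real.log_le_sub_one_of_pos (inv_pos.mpr h1)
    rw [Real.log_inv] at this
    linarith
  have hu : (1 + x)⁻¹ * (1 + x) = 1 := inv_mul_cancel₀ h1.ne'
  rw [abs_le]
  constructor
  · nlinarith [sq_nonneg x]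
  · nlinarith [sq_nonneg x, inv_pos.mpr h1]

lemma F_bound (n : ℕ) (B2 B1 : ℕ → ℝ)
    (h2 : ∑ k ∈ Finset.range (n + 1), (B2 k - (k : ℝ) * B1 k) = 0)
    (a : ℝ) (ha : 1 ≤ a) :
    |∑ k ∈ Finset.range (n + 1),
        (B2 k * (a + k)⁻¹ - B1 k * (Real.log (a + k) - Real.log a))|
      ≤ (∑ k ∈ Finset.range (n + 1), (|B2 k| * k + |B1 k| * k ^ 2)) / a ^ 2 := by
  have ha0 : (0:ℝ) < a := by linarith
  have hsplit : ∑ k ∈ Finset.range (n + 1),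
      (B2 k * (a + k)⁻¹ - B1 k * (Real.log (a + k) - Real.log a))
      = ∑ k ∈ Finset.range (n + 1),
        (B2 k * ((a + k)⁻¹ - a⁻¹)
          - B1 k * (Real.log (a + k) - Real.log a - k * a⁻¹)) := by
    have : ∑ k ∈ Finset.range (n + 1),
        (B2 k * (a + k)⁻¹ - B1 k * (Real.log (a + k) - Real.log a))
        = ∑ k ∈ Finset.range (n + 1),
          ((B2 k * ((a + k)⁻¹ - a⁻¹)
            - B1 k * (Real.log (a + k) - Real.log a - k * a⁻¹))
            + (B2 k - k * B1 k) * a⁻¹) := by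
      exact Finset.sum_congr rfl fun k _ => by ring
    rw [this, Finset.sum_add_distrib, ← Finset.sum_mul, h2, zero_mul, add_zero]
  rw [hsplit, Finset.sum_div]
  refine (Finset.abs_sum_le_sum_abs _ _).trans (Finset.sum_le_sum fun k _ => ?_)
  have hk0 : (0:ℝ) ≤ (k:ℝ) := Nat.cast_nonneg k
  have hak : (0:ℝ) < a + k := by linarith
  have hd1 : |(a + k)⁻¹ - a⁻¹| ≤ (k:ℝ) / a ^ 2 := by
    have e : (a + k)⁻¹ - a⁻¹ = -((k:ℝ) / (a * (a + k))) := by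
      field_simp
      ring
    rw [e, abs_neg, abs_of_nonneg (by positivity)]
    rw [div_le_div_iff₀ (by positivity) (by positivity)]
    nlinarith [mul_nonneg (mul_nonneg hk0 ha0.le) hk0]
  have hd2 : |Real.log (a + k) - Real.log a - k * a⁻¹| ≤ (k:ℝ) ^ 2 / a ^ 2 := by
    set x : ℝ := (k:ℝ) / a with hxdef
    have hx0 : 0 ≤ x := by positivity
    have hlog : Real.log (a + k) - Real.log a = Real.log (1 + x) := by
      rw [← Real.log_div hak.ne' ha0.ne']
      congr 1
      rw [hxdef]
      field_simp
    have hxx : (k:ℝ) * a⁻¹ = x := by rw [hxdef]; ring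
    rw [hlog, hxx]
    have := log_approx x hx0
    calc |Real.log (1 + x) - x| ≤ x ^ 2 := this
      _ = (k:ℝ) ^ 2 / a ^ 2 := by rw [hxdef, div_pow]
  calc |B2 k * ((a + k)⁻¹ - a⁻¹) - B1 k * (Real.log (a + k) - Real.log a - k * a⁻¹)|
      ≤ |B2 k| * |(a + k)⁻¹ - a⁻¹| + |B1 k| * |Real.log (a + k) - Real.log a - k * a⁻¹| := by
        rw [← abs_mul, ← abs_mul]; exact abs_sub _ _
    _ ≤ |B2 k| * ((k:ℝ) / a ^ 2) + |B1 k| * ((k:ℝ) ^ 2 / a ^ 2) := by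
        gcongr
    _ = (|B2 k| * k + |B1 k| * k ^ 2) / a ^ 2 := by ring


lemma log_diff_tendsto_nat (c : ℝ) (hc : 0 ≤ c) :
    Tendsto (fun N : ℕ => Real.log ((N:ℝ) + c) - Real.log N) atTop (𝓝 0) :=
  (log_diff_tendsto c hc).comp tendsto_natCast_atTop_atTop

lemma harmonic_tendsto (c : ℕ) :
    Tendsto (fun N : ℕ => (∑ i ∈ Finset.range (N + c), (1:ℝ)/(i+1)) - Real.log N)
      atTop (𝓝 Real.eulerMascheroniConstant) := by
  have h0 := Real.tendsto_harmonic_sub_log_add_one.comp (tendsto_add_atTop_nat c)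
  have h1 := log_diff_tendsto_nat ((c:ℝ) + 1) (by positivity)
  have h2 := h0.add h1
  rw [add_zero] at h2
  apply h2.congr
  intro N
  simp only [Function.comp_apply]
  have hh : ((harmonic (N + c) : ℚ) : ℝ) = ∑ i ∈ Finset.range (N + c), (1:ℝ)/(i+1) := by
    rw [harmonic]
    push_cast
    exact Finset.sum_congr rfl fun i _ => by rw [one_div]
  rw [hh]
  have : ((N + c : ℕ) : ℝ) + 1 = (N : ℝ) + ((c : ℝ) + 1) := by push_cast; ring
  rw [this]
  ring

theorem series_eq_linear_form (n : ℕ) (hn : 1 ≤ n)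
    (B2 B1 : ℕ → ℝ)
    (h1 : ∑ k ∈ Finset.range (n + 1), B1 k = 0)
    (h2 : ∑ k ∈ Finset.range (n + 1), (B2 k - (k : ℝ) * B1 k) = 0)
    (R : ℝ → ℝ)
    (hR : ∀ t : ℝ, R t = ∑ k ∈ Finset.range (n + 1),
        (B2 k / (t + k) ^ 2 + B1 k / (t + k))) :
    (∑' ν : ℕ, ∫ t in Set.Ici ((n : ℝ) + 1 + ν), R t)
      = (∑ k ∈ Finset.range (n + 1), B2 k) * Real.eulerMascheroniConstant
        + (∑ m ∈ Finset.Icc 1 n, ∑ k ∈ Finset.Icc m n, B1 k * Real.log (n + m))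
        - ∑ k ∈ Finset.range (n + 1),
            B2 k * ∑ i ∈ Finset.range (n + k), (1 : ℝ) / (i + 1) := by
  classical
  set H : ℕ → ℝ := fun m => ∑ i ∈ Finset.range m, (1:ℝ)/(i+1) with hH
  set f : ℕ → ℝ := fun ν => ∑ k ∈ Finset.range (n + 1),
      (B2 k * (((n:ℝ) + 1 + ν) + k)⁻¹
        - B1 k * (Real.log (((n:ℝ) + 1 + ν) + k) - Real.log ((n:ℝ) + 1 + ν))) with hf
  -- Step 1: the integrals
  have hint : ∀ ν : ℕ, ∫ t in Set.Ici ((n : ℝ) + 1 + ν), R t = f ν := by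
    intro ν
    exact integral_R n B2 B1 h1 R hR _ (by positivity)
  -- Step 2: summability
  have hsummable : Summable f := by
    set C : ℝ := ∑ k ∈ Finset.range (n + 1), (|B2 k| * k + |B1 k| * k ^ 2) with hC
    have hC0 : 0 ≤ C := Finset.sum_nonneg fun k _ => by positivity
    have hg : Summable (fun ν : ℕ => C / ((ν:ℝ) + 1) ^ 2) := by
      have b0 : Summable (fun m : ℕ => 1 / (m:ℝ) ^ 2) :=
        Real.summable_one_div_nat_pow.mpr (by norm_num)
      have b1 : Summable (fun ν : ℕ => 1 / ((ν:ℝ) + 1) ^ 2) := by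
        have := (summable_nat_add_iff (f := fun m : ℕ => 1 / (m:ℝ) ^ 2) 1).mpr b0
        apply this.congr
        intro ν; push_cast; ring
      simpa [div_eq_mul_inv, mul_comm] using b1.mul_left C
    refine Summable.of_norm_bounded hg fun ν => ?_
    have ha1 : (1:ℝ) ≤ (n:ℝ) + 1 + ν := by
      have h1 : (0:ℝ) ≤ (n:ℝ) := Nat.cast_nonneg n
      have h2 : (0:ℝ) ≤ (ν:ℝ) := Nat.cast_nonneg ν
      linarith
    have := F_bound n B2 B1 h2 ((n:ℝ) + 1 + ν) ha1
    rw [Real.norm_eq_abs]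
    refine this.trans (div_le_div_of_nonneg_left hC0 (by positivity) ?_)
    have h1 : (0:ℝ) ≤ (n:ℝ) := Nat.cast_nonneg n
    have h2 : (0:ℝ) ≤ (ν:ℝ) := Nat.cast_nonneg ν
    nlinarith
  -- Step 3: partial sums
  have hps : ∀ N : ℕ, ∑ ν ∈ Finset.range N, f ν
      = ∑ k ∈ Finset.range (n + 1),
          (B2 k * (H (N + n + k) - H (n + k))
            - B1 k * ∑ j ∈ Finset.range k,
                (Real.log ((N:ℝ) + n + 1 + j) - Real.log ((n:ℝ) + 1 + j))) := by
    intro N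
    simp only [hf]
    rw [Finset.sum_comm]
    refine Finset.sum_congr rfl fun k hk => ?_
    rw [Finset.sum_sub_distrib, ← Finset.mul_sum, ← Finset.mul_sum]
    congr 1
    · congr 1
      have e1 : ∑ i ∈ Finset.Ico (n + k) (N + n + k), (1:ℝ)/(i+1)
          = H (N + n + k) - H (n + k) :=
        Finset.sum_Ico_eq_sub _ (by omega)
      rw [← e1, Finset.sum_Ico_eq_sum_range]
      have hNN : N + n + k - (n + k) = N := by omega
      rw [hNN]
      refine Finset.sum_congr rfl fun ν _ => ?_
      rw [eq_comm, one_div]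
      congr 1
      push_cast; ring
    · congr 1
      have htele := tele_sum k (fun m : ℕ => Real.log ((n:ℝ) + 1 + m)) N
      calc ∑ ν ∈ Finset.range N,
            (Real.log ((n:ℝ) + 1 + ν + k) - Real.log ((n:ℝ) + 1 + ν))
          = ∑ ν ∈ Finset.range N,
            ((fun m : ℕ => Real.log ((n:ℝ) + 1 + m)) (ν + k)
              - (fun m : ℕ => Real.log ((n:ℝ) + 1 + m)) ν) := by
            refine Finset.sum_congr rfl fun ν _ => ?_
            simp only
            congr 2
            push_cast; ring
        _ = ∑ j ∈ Finset.range k,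
            ((fun m : ℕ => Real.log ((n:ℝ) + 1 + m)) (N + j)
              - (fun m : ℕ => Real.log ((n:ℝ) + 1 + m)) j) := htele
        _ = ∑ j ∈ Finset.range k,
            (Real.log ((N:ℝ) + n + 1 + j) - Real.log ((n:ℝ) + 1 + j)) := by
            refine Finset.sum_congr rfl fun j _ => ?_
            simp only
            congr 2
            push_cast; ring
  -- Step 4: the limit
  have hlim : Tendsto (fun N => ∑ ν ∈ Finset.range N, f ν) atTop
      (𝓝 ((∑ k ∈ Finset.range (n + 1), B2 k) * Real.eulerMascheroniConstant
        + (∑ m ∈ Finset.Icc 1 n, ∑ k ∈ Finset.Icc m n, B1 k * Real.log (n + m))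
        - ∑ k ∈ Finset.range (n + 1),
            B2 k * ∑ i ∈ Finset.range (n + k), (1 : ℝ) / (i + 1))) := by
    have key : ∀ N : ℕ, ∑ k ∈ Finset.range (n + 1),
          (B2 k * (H (N + n + k) - H (n + k))
            - B1 k * ∑ j ∈ Finset.range k,
                (Real.log ((N:ℝ) + n + 1 + j) - Real.log ((n:ℝ) + 1 + j)))
        = (∑ k ∈ Finset.range (n + 1),
            (B2 k * (H (N + n + k) - Real.log N)
              - B1 k * ∑ j ∈ Finset.range k,
                  (Real.log ((N:ℝ) + n + 1 + j) - Real.log N)))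
          + ∑ k ∈ Finset.range (n + 1),
              (B1 k * ∑ j ∈ Finset.range k, Real.log ((n:ℝ) + 1 + j)
                - B2 k * H (n + k)) := by
      intro N
      have hz : ∑ k ∈ Finset.range (n + 1), (B2 k - (k:ℝ) * B1 k) * Real.log N = 0 := by
        rw [← Finset.sum_mul, h2, zero_mul]
      have expand : ∀ k, B2 k * (H (N + n + k) - H (n + k))
            - B1 k * ∑ j ∈ Finset.range k,
                (Real.log ((N:ℝ) + n + 1 + j) - Real.log ((n:ℝ) + 1 + j))
          = (B2 k * (H (N + n + k) - Real.log N)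
              - B1 k * ∑ j ∈ Finset.range k,
                  (Real.log ((N:ℝ) + n + 1 + j) - Real.log N))
            + (B1 k * ∑ j ∈ Finset.range k, Real.log ((n:ℝ) + 1 + j)
                - B2 k * H (n + k))
            + (B2 k - (k:ℝ) * B1 k) * Real.log N := by
        intro k
        have hin : ∑ j ∈ Finset.range k,
              (Real.log ((N:ℝ) + n + 1 + j) - Real.log ((n:ℝ) + 1 + j))
            = ∑ j ∈ Finset.range k, (Real.log ((N:ℝ) + n + 1 + j) - Real.log N)
              + (k:ℝ) * Real.log N - ∑ j ∈ Finset.range k, Real.log ((n:ℝ) + 1 + j) := by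
          rw [Finset.sum_sub_distrib, Finset.sum_sub_distrib, Finset.sum_const,
            Finset.card_range, nsmul_eq_mul]
          ring
        rw [hin]; ring
      rw [Finset.sum_congr rfl fun k _ => expand k, Finset.sum_add_distrib,
        Finset.sum_add_distrib, hz, add_zero]
    have t1 : Tendsto (fun N : ℕ => ∑ k ∈ Finset.range (n + 1),
          (B2 k * (H (N + n + k) - Real.log N)
            - B1 k * ∑ j ∈ Finset.range k,
                (Real.log ((N:ℝ) + n + 1 + j) - Real.log N))) atTop
        (𝓝 (∑ k ∈ Finset.range (n + 1),
          (B2 k * Real.eulerMascheroniConstant - B1 k * 0))) := by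
      apply tendsto_finset_sum
      intro k hk
      apply Tendsto.sub
      · have hγ := (harmonic_tendsto (n + k)).const_mul (B2 k)
        apply hγ.congr
        intro N
        simp only [hH]
        have : N + (n + k) = N + n + k := by omega
        rw [this]
      · apply Tendsto.const_mul
        have h0 : Tendsto (fun N : ℕ => ∑ j ∈ Finset.range k,
            (Real.log ((N:ℝ) + n + 1 + j) - Real.log N)) atTop
            (𝓝 (∑ j ∈ Finset.range k, (0:ℝ))) := by
          apply tendsto_finset_sum
          intro j hj
          have hl := log_diff_tendsto_nat ((n:ℝ) + 1 + j) (by positivity)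
          apply hl.congr
          intro N
          congr 1
          ring
        simpa using h0
    have t2 := t1.add_const (∑ k ∈ Finset.range (n + 1),
        (B1 k * ∑ j ∈ Finset.range k, Real.log ((n:ℝ) + 1 + j) - B2 k * H (n + k)))
    have t3 : Tendsto (fun N => ∑ ν ∈ Finset.range N, f ν) atTop
        (𝓝 ((∑ k ∈ Finset.range (n + 1),
            (B2 k * Real.eulerMascheroniConstant - B1 k * 0))
          + ∑ k ∈ Finset.range (n + 1),
              (B1 k * ∑ j ∈ Finset.range k, Real.log ((n:ℝ) + 1 + j)
                - B2 k * H (n + k)))) := by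
      apply t2.congr
      intro N
      rw [← key N, ← hps N]
    have hL : ∑ k ∈ Finset.range (n + 1),
          B1 k * ∑ j ∈ Finset.range k, Real.log ((n:ℝ) + 1 + j)
        = ∑ m ∈ Finset.Icc 1 n, ∑ k ∈ Finset.Icc m n, B1 k * Real.log (n + m) := by
      have e1 : ∀ k, B1 k * ∑ j ∈ Finset.range k, Real.log ((n:ℝ) + 1 + j)
          = ∑ m ∈ Finset.Ico 1 (k + 1), B1 k * Real.log ((n:ℝ) + (m:ℕ)) := by
        intro k
        rw [Finset.mul_sum, Finset.sum_Ico_eq_sum_range]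
        have hk1 : k + 1 - 1 = k := by omega
        rw [hk1]
        refine Finset.sum_congr rfl fun j _ => ?_
        congr 2
        push_cast; ring
      have e2 : ∑ k ∈ Finset.range (n + 1),
            B1 k * ∑ j ∈ Finset.range k, Real.log ((n:ℝ) + 1 + j)
          = ∑ k ∈ Finset.Ico 1 (n + 1), ∑ m ∈ Finset.Ico 1 (k + 1),
              B1 k * Real.log ((n:ℝ) + (m:ℕ)) := by
        rw [Finset.sum_congr rfl fun k _ => e1 k, Finset.range_eq_Ico,
          Finset.sum_eq_sum_Ico_succ_bot (by omega : 0 < n + 1)]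
        simp only [Finset.Ico_self, Finset.sum_empty, zero_add]
      rw [e2, ← Finset.sum_Ico_Ico_comm 1 (n + 1)
        (fun m k => B1 k * Real.log ((n:ℝ) + (m:ℕ)))]
      rw [Finset.Ico_add_one_right_eq_Icc]
      exact Finset.sum_congr rfl fun m _ => by rw [Finset.Ico_add_one_right_eq_Icc]
    have hval : (∑ k ∈ Finset.range (n + 1),
          (B2 k * Real.eulerMascheroniConstant - B1 k * 0))
        + ∑ k ∈ Finset.range (n + 1),
            (B1 k * ∑ j ∈ Finset.range k, Real.log ((n:ℝ) + 1 + j)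
              - B2 k * H (n + k))
        = (∑ k ∈ Finset.range (n + 1), B2 k) * Real.eulerMascheroniConstant
          + (∑ m ∈ Finset.Icc 1 n, ∑ k ∈ Finset.Icc m n, B1 k * Real.log (n + m))
          - ∑ k ∈ Finset.range (n + 1),
              B2 k * ∑ i ∈ Finset.range (n + k), (1 : ℝ) / (i + 1) := by
      rw [Finset.sum_sub_distrib, Finset.sum_sub_distrib, hL, ← Finset.sum_mul]
      simp only [mul_zero, Finset.sum_const_zero, sub_zero, hH]
      ring
    rw [← hval]
    exact t3
  calc (∑' ν : ℕ, ∫ t in Set.Ici ((n : ℝ) + 1 + ν), R t) = ∑' ν : ℕ, f ν := tsum_congr hint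
    _ = _ := tendsto_nhds_unique hsummable.hasSum.tendsto_sum_nat hlim
end

section
/- For every integer n ≥ 1, the double integral over the open unit square of (x(1−x)y(1−y))^n / ((1−xy)(−log(xy))) dx dy equals Σ_{k=0}^∞ ∫_k^∞ (n!/((t+n+1)(t+n+2)⋯(t+2n+1)))² dt. -/
open Finset MeasureTheory Set Filter


lemma tail_aux (m : ℕ) (hm : 1 ≤ m) (c : ℝ) (hc : 0 ≤ c) :
    IntegrableOn (fun t : ℝ => ((t+1) ^ (m+1))⁻¹) (Ioi c) ∧
    ∫ t in Ioi c, ((t+1) ^ (m+1))⁻¹ = ((m : ℝ) * (c+1)^m)⁻¹ := by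
  have hm0 : (m : ℝ) ≠ 0 := Nat.cast_ne_zero.2 (by omega)
  have hderiv : ∀ t ∈ Ici c, HasDerivAt (fun t : ℝ => -(m : ℝ)⁻¹ * ((t+1)^m)⁻¹)
      (((t+1) ^ (m+1))⁻¹) t := by
    intro t ht
    have ht1 : (0:ℝ) < t + 1 := by simp only [Set.mem_Ici] at ht; linarith
    have h1 : HasDerivAt (fun t : ℝ => (t+1)^m) ((m : ℝ) * (t+1)^(m-1) * 1) t :=
      ((hasDerivAt_id t).add_const 1).pow m
    have h2 := (h1.inv (by positivity)).const_mul (-(m : ℝ)⁻¹)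
    have heq : -(m : ℝ)⁻¹ * (-((m : ℝ) * (t+1)^(m-1) * 1) / ((t+1)^m)^2)
        = ((t+1) ^ (m+1))⁻¹ := by
      rw [mul_one, neg_div, neg_mul_neg]
      rw [← mul_div_assoc, ← mul_assoc, inv_mul_cancel₀ hm0, one_mul]
      rw [← pow_mul]
      rw [div_eq_iff (by positivity), inv_mul_eq_div, eq_div_iff (by positivity), ← pow_add]
      congr 1
      omega
    rwa [heq] at h2
  have hpos : ∀ t ∈ Ioi c, (0:ℝ) ≤ ((t+1) ^ (m+1))⁻¹ := by
    intro t ht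
    simp only [Set.mem_Ioi] at ht
    have ht1 : (0:ℝ) < t + 1 := by linarith
    positivity
  have htend : Tendsto (fun t : ℝ => -(m : ℝ)⁻¹ * ((t+1)^m)⁻¹) atTop (nhds 0) := by
    have h1 : Tendsto (fun t : ℝ => (t+1)^m) atTop atTop :=
      (tendsto_pow_atTop (by omega)).comp (tendsto_atTop_add_const_right _ 1 tendsto_id)
    have := (h1.inv_tendsto_atTop).const_mul (-(m : ℝ)⁻¹)
    simpa using this
  refine ⟨integrableOn_Ioi_deriv_of_nonneg' hderiv hpos htend, ?_⟩
  rw [integral_Ioi_of_hasDerivAt_of_nonneg' hderiv hpos htend]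
  rw [mul_inv]
  ring


lemma beta_aux : ∀ (n : ℕ) (a : ℝ), 0 ≤ a →
    ∫ u in (0:ℝ)..1, u ^ a * (1 - u) ^ n
      = (n.factorial : ℝ) / ∏ i ∈ Finset.range (n + 1), (a + 1 + i) := by
  intro n
  induction n with
  | zero =>
    intro a ha
    simp only [pow_zero, mul_one]
    rw [integral_rpow (Or.inl (by linarith)), Real.one_rpow, Real.zero_rpow (by linarith),
      Finset.prod_range_one]
    norm_num
  | succ n ih =>
    intro a ha
    have ha1 : a + 1 ≠ 0 := by positivity
    -- integration by parts
    have hu : ∀ x ∈ uIcc (0:ℝ) 1, HasDerivAt (fun x : ℝ => (1 - x) ^ (n+1))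
        (((n:ℝ)+1) * (1 - x) ^ n * (-1)) x := by
      intro x _
      have h1 : HasDerivAt (fun x : ℝ => 1 - x) (-1) x := by
        simpa using (hasDerivAt_id x).const_sub 1
      have := h1.fun_pow (n+1)
      simpa [Nat.add_sub_cancel] using this
    have hv : ∀ x ∈ uIcc (0:ℝ) 1, HasDerivAt (fun x : ℝ => (a+1)⁻¹ * x ^ (a+1))
        (x ^ a) x := by
      intro x _
      have h1 : HasDerivAt (fun x : ℝ => x ^ (a+1)) ((a+1) * x ^ (a+1-1)) x :=
        Real.hasDerivAt_rpow_const (Or.inr (by linarith))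
      have h2 := h1.const_mul ((a+1)⁻¹)
      have : (a+1)⁻¹ * ((a+1) * x ^ (a+1-1)) = x ^ a := by
        rw [← mul_assoc, inv_mul_cancel₀ ha1, one_mul]
        norm_num
      rwa [this] at h2
    have hu' : IntervalIntegrable (fun x : ℝ => ((n:ℝ)+1) * (1 - x) ^ n * (-1))
        volume 0 1 := (Continuous.intervalIntegrable (by continuity) _ _)
    have hv' : IntervalIntegrable (fun x : ℝ => x ^ a) volume 0 1 :=
      intervalIntegral.intervalIntegrable_rpow (Or.inl ha)
    have key := intervalIntegral.integral_mul_deriv_eq_deriv_mul hu hv hu' hv'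
    have lhs_eq : ∫ u in (0:ℝ)..1, u ^ a * (1 - u) ^ (n+1)
        = ∫ x in (0:ℝ)..1, (1 - x) ^ (n+1) * x ^ a := by
      apply intervalIntegral.integral_congr; intro x _; ring
    rw [lhs_eq, key]
    have b1 : ((1:ℝ) - 1) ^ (n+1) * ((a+1)⁻¹ * (1:ℝ) ^ (a+1)) = 0 := by simp
    have b0 : ((1:ℝ) - 0) ^ (n+1) * ((a+1)⁻¹ * (0:ℝ) ^ (a+1)) = 0 := by
      rw [Real.zero_rpow ha1]; ring
    rw [b1, b0]
    have step : ∫ x in (0:ℝ)..1, ((n:ℝ)+1) * (1 - x) ^ n * (-1) * ((a+1)⁻¹ * x ^ (a+1))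
        = (-((n:ℝ)+1) * (a+1)⁻¹) * ∫ x in (0:ℝ)..1, x ^ (a+1) * (1 - x) ^ n := by
      rw [← intervalIntegral.integral_const_mul]
      apply intervalIntegral.integral_congr; intro x _; ring
    rw [step, ih (a+1) (by linarith)]
    have hprod : ∏ i ∈ Finset.range (n + 1 + 1), (a + 1 + i)
        = (a + 1) * ∏ i ∈ Finset.range (n + 1), (a + 1 + 1 + i) := by
      rw [Finset.prod_range_succ']
      simp only [Nat.cast_zero, add_zero, Nat.cast_add, Nat.cast_one]
      rw [mul_comm]
      congr 1
      apply Finset.prod_congr rfl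
      intro i _; push_cast; ring
    rw [hprod, Nat.factorial_succ]
    have hpn : (∏ i ∈ Finset.range (n + 1), (a + 1 + 1 + i)) ≠ 0 := by
      apply Finset.prod_ne_zero_iff.2; intro i _; positivity
    push_cast
    field_simp
    ring



lemma rpow_integrableOn (r : ℝ) (hr0 : 0 < r) (hr1 : r < 1) (k : ℝ) :
    IntegrableOn (fun t : ℝ => r ^ t) (Ioi k) := by
  have hlog : Real.log r < 0 := Real.log_neg hr0 hr1
  have : (fun t : ℝ => r ^ t) = fun t : ℝ => Real.exp (-(-Real.log r) * t) := by
    funext t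
    rw [Real.rpow_def_of_pos hr0, mul_comm]
    ring_nf
  rw [this]
  exact exp_neg_integrableOn_Ioi k (by linarith)

lemma exp_int (r : ℝ) (hr0 : 0 < r) (hr1 : r < 1) (k : ℝ) :
    ∫ t in Set.Ici k, r ^ t = r ^ k / (-Real.log r) := by
  have hlog : Real.log r < 0 := Real.log_neg hr0 hr1
  rw [MeasureTheory.integral_Ici_eq_integral_Ioi]
  have hderiv : ∀ t ∈ Ici k, HasDerivAt (fun t : ℝ => (Real.log r)⁻¹ * r ^ t) (r ^ t) t := by
    intro t _
    have h1 : HasDerivAt (fun t : ℝ => r ^ t) (r ^ t * Real.log r) t :=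
      (Real.hasStrictDerivAt_const_rpow hr0 t).hasDerivAt
    have h2 := h1.const_mul ((Real.log r)⁻¹)
    have : (Real.log r)⁻¹ * (r ^ t * Real.log r) = r ^ t := by
      rw [mul_comm, mul_assoc, mul_inv_cancel₀ (ne_of_lt hlog), mul_one]
    rwa [this] at h2
  have htend : Tendsto (fun t : ℝ => (Real.log r)⁻¹ * r ^ t) atTop (nhds 0) := by
    have h1 : Tendsto (fun t : ℝ => r ^ t) atTop (nhds 0) := by
      have : (fun t : ℝ => r ^ t) = Real.exp ∘ (fun t : ℝ => Real.log r * t) := by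
        funext t; rw [Real.rpow_def_of_pos hr0]; rfl
      rw [this]
      apply Real.tendsto_exp_atBot.comp
      exact Tendsto.const_mul_atTop_of_neg hlog tendsto_id
    simpa using h1.const_mul ((Real.log r)⁻¹)
  have := MeasureTheory.integral_Ioi_of_hasDerivAt_of_tendsto'
    (fun t ht => hderiv t ht) (rpow_integrableOn r hr0 hr1 k) htend
  rw [this]
  rw [div_neg, eq_neg_iff_add_eq_zero]
  field_simp
  ring


noncomputable def Bfun (n : ℕ) : ℝ → ℝ :=
  fun t => (n.factorial : ℝ) / ∏ i ∈ Finset.range (n + 1), (t + n + 1 + i)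

noncomputable def phi (n : ℕ) : ℝ → ℝ → ℝ := fun u t => u ^ t * (u * (1 - u)) ^ n

lemma Ppos (n : ℕ) {t : ℝ} (ht : 0 ≤ t) :
    0 < ∏ i ∈ Finset.range (n + 1), (t + n + 1 + i) := by
  apply Finset.prod_pos
  intro i _
  have h1 : (0:ℝ) ≤ (n:ℝ) := Nat.cast_nonneg n
  have h2 : (0:ℝ) ≤ (i:ℝ) := Nat.cast_nonneg i
  linarith

lemma Bnonneg (n : ℕ) {t : ℝ} (ht : 0 ≤ t) : 0 ≤ Bfun n t :=
  div_nonneg (Nat.cast_nonneg _) (Ppos n ht).le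

lemma Pge (n : ℕ) {t : ℝ} (ht : 0 ≤ t) :
    (t + 1) ^ (n + 1) ≤ ∏ i ∈ Finset.range (n + 1), (t + n + 1 + i) := by
  have : (t + 1) ^ (n + 1) = ∏ _i ∈ Finset.range (n + 1), (t + 1) := by
    rw [Finset.prod_const, Finset.card_range]
  rw [this]
  apply Finset.prod_le_prod
  · intro i _; linarith
  · intro i _
    have h1 : (0:ℝ) ≤ (n:ℝ) := Nat.cast_nonneg n
    have h2 : (0:ℝ) ≤ (i:ℝ) := Nat.cast_nonneg i
    linarith

lemma Bsq_le (n : ℕ) (hn : 1 ≤ n) {t : ℝ} (ht : 0 ≤ t) :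
    (Bfun n t) ^ 2 ≤ (n.factorial : ℝ) ^ 2 * (((t + 1) ^ 4)⁻¹) := by
  have hP := Ppos n ht
  have h1 : (t + 1) ^ 2 ≤ ∏ i ∈ Finset.range (n + 1), (t + n + 1 + i) := by
    refine le_trans ?_ (Pge n ht)
    apply pow_le_pow_right₀ (by linarith) (by omega)
  have h2 : ((t + 1) ^ 2) ^ 2 ≤ (∏ i ∈ Finset.range (n + 1), (t + n + 1 + i)) ^ 2 :=
    pow_le_pow_left₀ (by positivity) h1 2
  have h3 : ((t+1) ^ 2) ^ 2 = (t+1) ^ 4 := by ring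
  rw [Bfun, div_pow, div_eq_mul_inv]
  apply mul_le_mul_of_nonneg_left _ (by positivity)
  apply inv_anti₀ (by positivity)
  rw [← h3]; exact h2

lemma Bsq_measurable (n : ℕ) : Measurable (fun t => (Bfun n t) ^ 2) := by
  have hP : Continuous (fun t : ℝ => ∏ i ∈ Finset.range (n + 1), (t + n + 1 + i)) := by
    apply continuous_finset_prod
    intro i _
    continuity
  exact ((measurable_const.div hP.measurable).pow_const 2)

lemma Bfun_measurable (n : ℕ) : Measurable (Bfun n) := by
  have hP : Continuous (fun t : ℝ => ∏ i ∈ Finset.range (n + 1), (t + n + 1 + i)) := by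
    apply continuous_finset_prod
    intro i _
    continuity
  exact measurable_const.div hP.measurable

lemma g_integrableOn (n : ℕ) (hn : 1 ≤ n) (k : ℕ) :
    IntegrableOn (fun t => (Bfun n t) ^ 2) (Ici (k : ℝ)) := by
  rw [integrableOn_Ici_iff_integrableOn_Ioi]
  have hk : (0:ℝ) ≤ (k:ℝ) := Nat.cast_nonneg k
  have hb := (tail_aux 3 (by norm_num) (k:ℝ) hk).1
  have hb' : IntegrableOn (fun t : ℝ => (n.factorial : ℝ) ^ 2 * ((t+1) ^ (3+1))⁻¹)
      (Ioi (k:ℝ)) := hb.const_mul _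
  apply Integrable.mono' hb' ((Bsq_measurable n).aestronglyMeasurable.restrict)
  rw [ae_restrict_iff' measurableSet_Ioi]
  apply Eventually.of_forall
  intro t ht
  simp only [Set.mem_Ioi] at ht
  have ht0 : (0:ℝ) ≤ t := le_trans hk ht.le
  rw [Real.norm_eq_abs, abs_of_nonneg (sq_nonneg _)]
  simpa using Bsq_le n hn ht0

lemma summable_rk (n : ℕ) (hn : 1 ≤ n) :
    Summable (fun k : ℕ => ∫ t in Ici (k:ℝ), (Bfun n t) ^ 2) := by
  have hbound : ∀ k : ℕ, ∫ t in Ici (k:ℝ), (Bfun n t) ^ 2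
      ≤ (n.factorial : ℝ) ^ 2 * ((3:ℝ) * ((k:ℝ)+1) ^ 3)⁻¹ := by
    intro k
    have hk : (0:ℝ) ≤ (k:ℝ) := Nat.cast_nonneg k
    have htail := tail_aux 3 (by norm_num) (k:ℝ) hk
    rw [MeasureTheory.integral_Ici_eq_integral_Ioi]
    have h1 : ∫ t in Ioi (k:ℝ), (Bfun n t) ^ 2
        ≤ ∫ t in Ioi (k:ℝ), (n.factorial : ℝ) ^ 2 * ((t+1) ^ (3+1))⁻¹ := by
      apply setIntegral_mono_on
        (((integrableOn_Ici_iff_integrableOn_Ioi).mp (g_integrableOn n hn k)))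
        (htail.1.const_mul _) measurableSet_Ioi
      intro t ht
      simp only [Set.mem_Ioi] at ht
      simpa using Bsq_le n hn (le_trans hk ht.le)
    refine le_trans h1 ?_
    rw [integral_const_mul, htail.2]
    apply le_of_eq
    norm_num [mul_inv]
  apply Summable.of_nonneg_of_le
    (fun k => setIntegral_nonneg measurableSet_Ici (fun t _ => sq_nonneg _)) hbound
  apply Summable.mul_left
  have h1 : Summable (fun k : ℕ => ((k:ℝ) ^ 3)⁻¹) := by
    simpa using Real.summable_one_div_nat_pow.mpr (by norm_num : 2 ≤ 3)
  have h2 := (summable_nat_add_iff 1).mpr h1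
  apply Summable.congr (h2.mul_left ((3:ℝ))⁻¹)
  intro k
  push_cast
  rw [mul_inv]

lemma phi_nonneg (n : ℕ) {u : ℝ} (hu : u ∈ Ioo (0:ℝ) 1) (t : ℝ) : 0 ≤ phi n u t := by
  obtain ⟨h0, h1⟩ := hu
  apply mul_nonneg (Real.rpow_nonneg h0.le t)
  apply pow_nonneg
  nlinarith

lemma phi_measurable (n : ℕ) : Measurable (fun p : ℝ × ℝ => phi n p.1 p.2) := by
  unfold phi
  measurability

lemma phi_integrableOn (n : ℕ) {t : ℝ} (ht : 0 ≤ t) :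
    IntegrableOn (fun y => phi n y t) (Ioo (0:ℝ) 1) := by
  apply Integrable.mono' (integrable_const (1:ℝ))
  · exact ((phi_measurable n).comp (measurable_id.prodMk measurable_const)).aestronglyMeasurable.restrict
  · rw [ae_restrict_iff' measurableSet_Ioo]
    apply Eventually.of_forall
    intro y hy
    obtain ⟨h0, h1⟩ := hy
    rw [Real.norm_eq_abs, abs_of_nonneg (phi_nonneg n ⟨h0, h1⟩ t)]
    unfold phi
    calc y ^ t * (y * (1 - y)) ^ n ≤ 1 * 1 := by
          apply mul_le_mul
          · exact Real.rpow_le_one h0.le h1.le ht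
          · apply pow_le_one₀ (by nlinarith)
            nlinarith
          · apply pow_nonneg; nlinarith
          · norm_num
      _ = 1 := by norm_num

lemma B_val (n : ℕ) {t : ℝ} (ht : 0 ≤ t) :
    ∫ y in Ioo (0:ℝ) 1, phi n y t = Bfun n t := by
  have h1 : ∫ y in Ioo (0:ℝ) 1, phi n y t
      = ∫ y in Ioo (0:ℝ) 1, y ^ (t + (n:ℝ)) * (1 - y) ^ n := by
    apply setIntegral_congr_fun measurableSet_Ioo
    intro y hy
    obtain ⟨h0, _⟩ := hy
    show y ^ t * (y * (1 - y)) ^ n = y ^ (t + (n:ℝ)) * (1 - y) ^ n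
    rw [mul_pow, Real.rpow_add h0, Real.rpow_natCast]
    ring
  rw [h1, ← MeasureTheory.integral_Ioc_eq_integral_Ioo,
    ← intervalIntegral.integral_of_le (zero_le_one)]
  rw [beta_aux n (t + (n:ℝ)) (by positivity)]
  unfold Bfun
  congr 1

lemma phi_mul (n : ℕ) {x y : ℝ} (hx : 0 < x) (hy : 0 < y) (t : ℝ) :
    phi n x t * phi n y t = (x*y) ^ t * (x*(1-x)*y*(1-y)) ^ n := by
  have e1 : x ^ t * y ^ t = (x*y) ^ t := (Real.mul_rpow hx.le hy.le).symm
  have e2 : (x*(1-x))^n * (y*(1-y))^n = (x*(1-x)*y*(1-y))^n := by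
    rw [← mul_pow]; congr 1; ring
  calc phi n x t * phi n y t
      = (x ^ t * y ^ t) * ((x*(1-x))^n * (y*(1-y))^n) := by unfold phi; ring
    _ = (x*y) ^ t * (x*(1-x)*y*(1-y)) ^ n := by rw [e1, e2]

lemma pointwise_sum (n : ℕ) {x y : ℝ} (hx : x ∈ Ioo (0:ℝ) 1) (hy : y ∈ Ioo (0:ℝ) 1) :
    (x*(1-x)*y*(1-y)) ^ n / ((1 - x*y) * (-Real.log (x*y)))
      = ∑' k : ℕ, ∫ t in Ici (k:ℝ), phi n x t * phi n y t := by
  obtain ⟨hx0, hx1⟩ := hx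
  obtain ⟨hy0, hy1⟩ := hy
  have hr0 : 0 < x*y := mul_pos hx0 hy0
  have hr1 : x*y < 1 := by nlinarith
  have hlog : Real.log (x*y) < 0 := Real.log_neg hr0 hr1
  have hA : (0:ℝ) ≤ (x*(1-x)*y*(1-y)) ^ n := by
    apply pow_nonneg
    have h1 : (0:ℝ) ≤ x*(1-x) := mul_nonneg hx0.le (by linarith)
    have h2 : (0:ℝ) ≤ 1-y := by linarith
    calc (0:ℝ) ≤ ((x*(1-x))*y)*(1-y) := mul_nonneg (mul_nonneg h1 hy0.le) h2
      _ = x*(1-x)*y*(1-y) := by ring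
  have hterm : ∀ k : ℕ, ∫ t in Ici (k:ℝ), phi n x t * phi n y t
      = (x*y) ^ (k:ℕ) * ((x*(1-x)*y*(1-y)) ^ n / (-Real.log (x*y))) := by
    intro k
    have h1 : ∀ t : ℝ, phi n x t * phi n y t = (x*y) ^ t * (x*(1-x)*y*(1-y)) ^ n :=
      phi_mul n hx0 hy0
    rw [show (fun t => phi n x t * phi n y t) = fun t => (x*y) ^ t * (x*(1-x)*y*(1-y)) ^ n
      from funext h1]
    rw [MeasureTheory.integral_mul_const, exp_int (x*y) hr0 hr1 (k:ℝ)]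
    rw [← Real.rpow_natCast (x*y) k]
    ring
  rw [tsum_congr hterm, tsum_mul_right, tsum_geometric_of_lt_one hr0.le hr1]
  field_simp

lemma hk_eq (n : ℕ) {x y : ℝ} (hx : x ∈ Ioo (0:ℝ) 1) (hy : y ∈ Ioo (0:ℝ) 1) (k : ℕ) :
    ∫ t in Ici (k:ℝ), phi n x t * phi n y t
      = (x*y) ^ (k:ℕ) * ((x*(1-x)*y*(1-y)) ^ n / (-Real.log (x*y))) := by
  obtain ⟨hx0, hx1⟩ := hx
  obtain ⟨hy0, hy1⟩ := hy
  have hr0 : 0 < x*y := mul_pos hx0 hy0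
  have hr1 : x*y < 1 := by nlinarith
  rw [show (fun t => phi n x t * phi n y t)
      = fun t => (x*y) ^ t * (x*(1-x)*y*(1-y)) ^ n from funext (phi_mul n hx0 hy0)]
  rw [MeasureTheory.integral_mul_const, exp_int (x*y) hr0 hr1 (k:ℝ)]
  rw [← Real.rpow_natCast (x*y) k]
  ring

lemma base_nonneg (n : ℕ) {x y : ℝ} (hx : x ∈ Ioo (0:ℝ) 1) (hy : y ∈ Ioo (0:ℝ) 1) :
    (0:ℝ) ≤ (x*(1-x)*y*(1-y)) ^ n := by
  obtain ⟨hx0, hx1⟩ := hx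
  obtain ⟨hy0, hy1⟩ := hy
  apply pow_nonneg
  have h1 : (0:ℝ) ≤ x*(1-x) := mul_nonneg hx0.le (by linarith)
  calc (0:ℝ) ≤ ((x*(1-x))*y)*(1-y) := mul_nonneg (mul_nonneg h1 hy0.le) (by linarith)
    _ = x*(1-x)*y*(1-y) := by ring

lemma hk_nonneg (n : ℕ) {x y : ℝ} (hx : x ∈ Ioo (0:ℝ) 1) (hy : y ∈ Ioo (0:ℝ) 1) (k : ℕ) :
    0 ≤ ∫ t in Ici (k:ℝ), phi n x t * phi n y t := by
  apply setIntegral_nonneg measurableSet_Ici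
  intro t _
  exact mul_nonneg (phi_nonneg n hx t) (phi_nonneg n hy t)

lemma hk_summable (n : ℕ) {x y : ℝ} (hx : x ∈ Ioo (0:ℝ) 1) (hy : y ∈ Ioo (0:ℝ) 1) :
    Summable (fun k : ℕ => ∫ t in Ici (k:ℝ), phi n x t * phi n y t) := by
  obtain ⟨hx0, hx1⟩ := hx
  obtain ⟨hy0, hy1⟩ := hy
  have hr0 : 0 < x*y := mul_pos hx0 hy0
  have hr1 : x*y < 1 := by nlinarith
  apply Summable.congr (((summable_geometric_of_lt_one hr0.le hr1).mul_right
    ((x*(1-x)*y*(1-y)) ^ n / (-Real.log (x*y)))))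
  intro k
  exact (hk_eq n ⟨hx0, hx1⟩ ⟨hy0, hy1⟩ k).symm

lemma hk_integrable (n : ℕ) {x y : ℝ} (hx : x ∈ Ioo (0:ℝ) 1) (hy : y ∈ Ioo (0:ℝ) 1) (k : ℕ) :
    IntegrableOn (fun t => phi n x t * phi n y t) (Ici (k:ℝ)) := by
  obtain ⟨hx0, hx1⟩ := hx
  obtain ⟨hy0, hy1⟩ := hy
  have hr0 : 0 < x*y := mul_pos hx0 hy0
  have hr1 : x*y < 1 := by nlinarith
  rw [show (fun t => phi n x t * phi n y t)
      = fun t => (x*y) ^ t * (x*(1-x)*y*(1-y)) ^ n from funext (phi_mul n hx0 hy0)]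
  rw [integrableOn_Ici_iff_integrableOn_Ioi]
  exact (rpow_integrableOn (x*y) hr0 hr1 (k:ℝ)).mul_const _

lemma phi_lint (n : ℕ) {t : ℝ} (ht : 0 ≤ t) :
    ∫⁻ y in Ioo (0:ℝ) 1, ENNReal.ofReal (phi n y t) = ENNReal.ofReal (Bfun n t) := by
  rw [← B_val n ht]
  refine (ofReal_integral_eq_lintegral_ofReal (phi_integrableOn n ht) ?_).symm
  have : ∀ᵐ y ∂(volume.restrict (Ioo (0:ℝ) 1)), 0 ≤ phi n y t := by
    rw [ae_restrict_iff' measurableSet_Ioo]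
    exact Eventually.of_forall (fun y hy => phi_nonneg n hy t)
  exact this

lemma f_nonneg (n : ℕ) {x y : ℝ} (hx : x ∈ Ioo (0:ℝ) 1) (hy : y ∈ Ioo (0:ℝ) 1) :
    0 ≤ (x*(1-x)*y*(1-y)) ^ n / ((1 - x*y) * (-Real.log (x*y))) := by
  obtain ⟨hx0, hx1⟩ := hx
  obtain ⟨hy0, hy1⟩ := hy
  have hr0 : 0 < x*y := mul_pos hx0 hy0
  have hr1 : x*y < 1 := by nlinarith
  have hlog : Real.log (x*y) < 0 := Real.log_neg hr0 hr1
  apply div_nonneg (base_nonneg n ⟨hx0, hx1⟩ ⟨hy0, hy1⟩)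
  apply mul_nonneg (by linarith) (by linarith)

lemma step_k (n : ℕ) (hn : 1 ≤ n) (k : ℕ) :
    (∫⁻ x in Ioo (0:ℝ) 1, ∫⁻ y in Ioo (0:ℝ) 1,
        ∫⁻ t in Ici (k:ℝ), ENNReal.ofReal (phi n x t * phi n y t))
      = ENNReal.ofReal (∫ t in Ici (k:ℝ), (Bfun n t) ^ 2) := by
  have hk0 : (0:ℝ) ≤ (k:ℝ) := Nat.cast_nonneg k
  have hphi_t : ∀ x : ℝ, Measurable (fun t : ℝ => ENNReal.ofReal (phi n x t)) := by
    intro x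
    exact ((phi_measurable n).comp (measurable_const.prodMk measurable_id)).ennreal_ofReal
  have hphi_y : ∀ t : ℝ, Measurable (fun y : ℝ => ENNReal.ofReal (phi n y t)) := by
    intro t
    exact ((phi_measurable n).comp (measurable_id.prodMk measurable_const)).ennreal_ofReal
  have inner_eq : ∀ x ∈ Ioo (0:ℝ) 1,
      (∫⁻ y in Ioo (0:ℝ) 1, ∫⁻ t in Ici (k:ℝ), ENNReal.ofReal (phi n x t * phi n y t))
        = ∫⁻ t in Ici (k:ℝ), ENNReal.ofReal (phi n x t) * ENNReal.ofReal (Bfun n t) := by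
    intro x hx
    have e1 : (∫⁻ y in Ioo (0:ℝ) 1, ∫⁻ t in Ici (k:ℝ), ENNReal.ofReal (phi n x t * phi n y t))
        = ∫⁻ y in Ioo (0:ℝ) 1, ∫⁻ t in Ici (k:ℝ),
            ENNReal.ofReal (phi n x t) * ENNReal.ofReal (phi n y t) := by
      apply lintegral_congr
      intro y
      apply lintegral_congr
      intro t
      rw [ENNReal.ofReal_mul (phi_nonneg n hx t)]
    rw [e1]
    have hswap : Measurable (fun q : ℝ × ℝ =>
        ENNReal.ofReal (phi n x q.2) * ENNReal.ofReal (phi n q.1 q.2)) := by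
      exact (((phi_measurable n).comp (measurable_const.prodMk measurable_snd)).ennreal_ofReal).mul
        (((phi_measurable n).comp (measurable_fst.prodMk measurable_snd)).ennreal_ofReal)
    rw [lintegral_lintegral_swap hswap.aemeasurable]
    apply setLIntegral_congr_fun measurableSet_Ici
    intro t ht
    beta_reduce
    rw [lintegral_const_mul _ (hphi_y t), phi_lint n (le_trans hk0 ht)]
  rw [setLIntegral_congr_fun measurableSet_Ioo inner_eq]
  have hswap2 : Measurable (fun q : ℝ × ℝ =>
      ENNReal.ofReal (phi n q.1 q.2) * ENNReal.ofReal (Bfun n q.2)) := by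
    exact (((phi_measurable n).comp (measurable_fst.prodMk measurable_snd)).ennreal_ofReal).mul
      (((Bfun_measurable n).ennreal_ofReal).comp measurable_snd)
  rw [lintegral_lintegral_swap hswap2.aemeasurable]
  have e2 : (∫⁻ t in Ici (k:ℝ), ∫⁻ x in Ioo (0:ℝ) 1,
      ENNReal.ofReal (phi n x t) * ENNReal.ofReal (Bfun n t))
      = ∫⁻ t in Ici (k:ℝ), ENNReal.ofReal ((Bfun n t) ^ 2) := by
    apply setLIntegral_congr_fun measurableSet_Ici
    intro t ht
    have ht0 : (0:ℝ) ≤ t := le_trans hk0 ht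
    beta_reduce
    rw [lintegral_mul_const _ (hphi_y t), phi_lint n ht0, sq,
      ENNReal.ofReal_mul (Bnonneg n ht0)]
  rw [e2]
  refine (ofReal_integral_eq_lintegral_ofReal (g_integrableOn n hn k) ?_).symm
  have : ∀ᵐ t ∂(volume.restrict (Ici (k:ℝ))), 0 ≤ (Bfun n t) ^ 2 := by
    apply Eventually.of_forall
    intro t
    exact sq_nonneg _
  exact this

theorem double_integral_eq_shifted_series (n : ℕ) (hn : 1 ≤ n) :
    (∫ x in (0:ℝ)..1, ∫ y in (0:ℝ)..1,
        (x * (1 - x) * y * (1 - y)) ^ n / ((1 - x * y) * (-Real.log (x * y))))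
      = ∑' k : ℕ, ∫ t in Set.Ici (k : ℝ),
          ((n.factorial : ℝ) / ∏ i ∈ Finset.range (n + 1), (t + n + 1 + i)) ^ 2 := by
  have hB : ∀ t : ℝ, ((n.factorial : ℝ) / ∏ i ∈ Finset.range (n + 1), (t + n + 1 + i))
      = Bfun n t := fun t => rfl
  simp only [hB]
  set f : ℝ → ℝ → ℝ := fun x y =>
    (x * (1 - x) * y * (1 - y)) ^ n / ((1 - x * y) * (-Real.log (x * y))) with hfdef
  have hfm : Measurable (fun p : ℝ × ℝ => f p.1 p.2) := by
    simp only [hfdef]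
    apply Measurable.div
    · exact Continuous.measurable (by continuity)
    · exact ((continuous_const.sub (continuous_fst.mul continuous_snd)).measurable).mul
        ((Real.measurable_log.comp (measurable_fst.mul measurable_snd)).neg)
  have hpm : Measurable (fun q : (ℝ × ℝ) × ℝ =>
      ENNReal.ofReal (phi n q.1.1 q.2 * phi n q.1.2 q.2)) := by
    apply Measurable.ennreal_ofReal
    exact (((phi_measurable n).comp (measurable_fst.fst.prodMk measurable_snd)).mul
      ((phi_measurable n).comp (measurable_fst.snd.prodMk measurable_snd)))
  have hΦm : ∀ k : ℕ, Measurable (fun p : ℝ × ℝ =>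
      ∫⁻ t in Ici (k:ℝ), ENNReal.ofReal (phi n p.1 t * phi n p.2 t)) :=
    fun k => hpm.lintegral_prod_right'
  -- key lintegral identity
  have keyL : (∫⁻ x in Ioo (0:ℝ) 1, ∫⁻ y in Ioo (0:ℝ) 1, ENNReal.ofReal (f x y))
      = ∑' k : ℕ, ENNReal.ofReal (∫ t in Set.Ici (k:ℝ), (Bfun n t) ^ 2) := by
    have e1 : ∀ x ∈ Ioo (0:ℝ) 1,
        (∫⁻ y in Ioo (0:ℝ) 1, ENNReal.ofReal (f x y))
          = ∑' k : ℕ, ∫⁻ y in Ioo (0:ℝ) 1,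
              ∫⁻ t in Ici (k:ℝ), ENNReal.ofReal (phi n x t * phi n y t) := by
      intro x hx
      rw [setLIntegral_congr_fun measurableSet_Ioo (f := fun y => ENNReal.ofReal (f x y))
        (g := fun y => ∑' k : ℕ, ∫⁻ t in Ici (k:ℝ), ENNReal.ofReal (phi n x t * phi n y t))
        (fun y hy => ?_)]
      · exact lintegral_tsum (fun k => ((hΦm k).comp measurable_prodMk_left).aemeasurable)
      · show ENNReal.ofReal (f x y) = _
        rw [hfdef]
        simp only []
        rw [pointwise_sum n hx hy]
        rw [ENNReal.ofReal_tsum_of_nonneg (hk_nonneg n hx hy) (hk_summable n hx hy)]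
        apply tsum_congr
        intro k
        apply ofReal_integral_eq_lintegral_ofReal (hk_integrable n hx hy k)
        have : ∀ᵐ t ∂(volume.restrict (Ici (k:ℝ))), 0 ≤ phi n x t * phi n y t :=
          Eventually.of_forall (fun t => mul_nonneg (phi_nonneg n hx t) (phi_nonneg n hy t))
        exact this
    rw [setLIntegral_congr_fun measurableSet_Ioo e1]
    rw [lintegral_tsum (fun k => ((hΦm k).lintegral_prod_right').aemeasurable)]
    exact tsum_congr (fun k => step_k n hn k)
  have hsum := summable_rk n hn
  have hL_eq : (∫⁻ x in Ioo (0:ℝ) 1, ∫⁻ y in Ioo (0:ℝ) 1, ENNReal.ofReal (f x y))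
      = ENNReal.ofReal (∑' k : ℕ, ∫ t in Set.Ici (k:ℝ), (Bfun n t) ^ 2) := by
    rw [keyL, ← ENNReal.ofReal_tsum_of_nonneg
      (fun k => setIntegral_nonneg measurableSet_Ici (fun t _ => sq_nonneg _)) hsum]
  have hL_ne_top : (∫⁻ x in Ioo (0:ℝ) 1, ∫⁻ y in Ioo (0:ℝ) 1, ENNReal.ofReal (f x y)) ≠ ⊤ := by
    rw [hL_eq]; exact ENNReal.ofReal_ne_top
  -- real side
  have hFl : Measurable (fun x => ∫⁻ y in Ioo (0:ℝ) 1, ENNReal.ofReal (f x y)) :=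
    (hfm.ennreal_ofReal).lintegral_prod_right'
  have real1 : ∀ x ∈ Ioo (0:ℝ) 1,
      (∫ y in (0:ℝ)..1, f x y) = (∫⁻ y in Ioo (0:ℝ) 1, ENNReal.ofReal (f x y)).toReal := by
    intro x hx
    rw [intervalIntegral.integral_of_le zero_le_one, MeasureTheory.integral_Ioc_eq_integral_Ioo]
    rw [integral_eq_lintegral_of_nonneg_ae ?_ ?_]
    · have : ∀ᵐ y ∂(volume.restrict (Ioo (0:ℝ) 1)), 0 ≤ f x y := by
        rw [ae_restrict_iff' measurableSet_Ioo]
        exact Eventually.of_forall (fun y hy => f_nonneg n hx hy)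
      exact this
    · exact (hfm.comp (measurable_const.prodMk measurable_id)).aestronglyMeasurable
  calc (∫ x in (0:ℝ)..1, ∫ y in (0:ℝ)..1, f x y)
      = ∫ x in Ioo (0:ℝ) 1, ∫ y in (0:ℝ)..1, f x y := by
        rw [intervalIntegral.integral_of_le zero_le_one,
          MeasureTheory.integral_Ioc_eq_integral_Ioo]
    _ = ∫ x in Ioo (0:ℝ) 1, (∫⁻ y in Ioo (0:ℝ) 1, ENNReal.ofReal (f x y)).toReal :=
        setIntegral_congr_fun measurableSet_Ioo real1
    _ = (∫⁻ x in Ioo (0:ℝ) 1, ∫⁻ y in Ioo (0:ℝ) 1, ENNReal.ofReal (f x y)).toReal := by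
        apply integral_toReal hFl.aemeasurable
        exact ae_lt_top hFl hL_ne_top
    _ = ∑' k : ℕ, ∫ t in Set.Ici (k:ℝ), (Bfun n t) ^ 2 := by
        rw [hL_eq, ENNReal.toReal_ofReal]
        exact tsum_nonneg (fun k => setIntegral_nonneg measurableSet_Ici (fun t _ => sq_nonneg _))
end
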